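/- Let D = (d_1, ..., d_n) be a graphic nonincreasing sequence of positive integers with d_1 < n. Then for each j with 2 ≤ j ≤ n there exists a simple graph G on vertex set {1, ..., n} realizing D (vertex i has degree d_i) that contains the edge (1, j). -/

import Mathlib

/-- A finite sequence of natural numbers is graphic if it is, up to permutation,
the degree sequence of a simple graph on `l.length` vertices. -/
def IsGraphic (l : List ℕ) : Prop :=
  ∃ G : SimpleGraph (Fin l.length),
    List.Perm (List.ofFn fun v => Nat.card (G.neighborSet v)) l


lemma perm_ofFn_equiv {m n : ℕ} {f : Fin m → ℕ} {g : Fin n → ℕ}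
    (h : (List.ofFn f).Perm (List.ofFn g)) :
    ∃ σ : Fin n ≃ Fin m, ∀ i, f (σ i) = g i := by
  have hmn : m = n := by simpa using h.length_eq
  subst hmn
  have h1 : (List.ofFn (f ∘ Tuple.sort f)).Perm (List.ofFn (g ∘ Tuple.sort g)) :=
    ((Tuple.sort f).ofFn_comp_perm f).trans (h.trans ((Tuple.sort g).ofFn_comp_perm g).symm)
  have hs1 : List.Pairwise (· ≤ ·) (List.ofFn (f ∘ Tuple.sort f)) := by
    rw [← List.sortedLE_iff_pairwise, List.sortedLE_ofFn_iff]
    exact Tuple.monotone_sort f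
  have hs2 : List.Pairwise (· ≤ ·) (List.ofFn (g ∘ Tuple.sort g)) := by
    rw [← List.sortedLE_iff_pairwise, List.sortedLE_ofFn_iff]
    exact Tuple.monotone_sort g
  have heq : f ∘ Tuple.sort f = g ∘ Tuple.sort g :=
    List.ofFn_injective (List.Perm.eq_of_pairwise' hs1 hs2 h1)
  refine ⟨(Tuple.sort g).symm.trans (Tuple.sort f), fun i => ?_⟩
  have := congrFun heq ((Tuple.sort g).symm i)
  simpa using this

open SimpleGraph

section Switch
variable {V : Type*} (G : SimpleGraph V) (u v k m : V)

/-- The 2-switch replacing edges `uk, vm` by `uv, km`. -/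
def switchGraph : SimpleGraph V where
  Adj a b := (G.Adj a b ∧
      ¬((a = u ∧ b = k) ∨ (a = k ∧ b = u) ∨ (a = v ∧ b = m) ∨ (a = m ∧ b = v))) ∨
    (a ≠ b ∧ ((a = u ∧ b = v) ∨ (a = v ∧ b = u) ∨ (a = k ∧ b = m) ∨ (a = m ∧ b = k)))
  symm := by
    refine ⟨fun a b h => ?_⟩
    rcases h with ⟨h1, h2⟩ | ⟨h1, h2⟩
    · exact Or.inl ⟨h1.symm, fun hc => h2 (by tauto)⟩
    · exact Or.inr ⟨h1.symm, by tauto⟩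
  loopless := by
    refine ⟨fun a h => ?_⟩
    rcases h with ⟨h1, _⟩ | ⟨h1, _⟩
    · exact G.loopless.irrefl a h1
    · exact h1 rfl

variable {G u v k m}

lemma switchGraph_adj_uv (huv : u ≠ v) : (switchGraph G u v k m).Adj u v :=
  Or.inr ⟨huv, Or.inl ⟨rfl, rfl⟩⟩

end Switch

section Sets

variable {V : Type*} {G : SimpleGraph V} {u v k m : V}
variable (huk : G.Adj u k) (hvm : G.Adj v m) (huv : ¬ G.Adj u v) (hkm : ¬ G.Adj k m)
variable (huvne : u ≠ v) (hum : u ≠ m) (hvk : v ≠ k) (hkmne : k ≠ m)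

include huk hvm huv hkm huvne hum hvk hkmne

lemma switch_nbr_u : (switchGraph G u v k m).neighborSet u = insert v (G.neighborSet u \ {k}) := by
  have huk' : u ≠ k := G.ne_of_adj huk
  ext x
  simp only [mem_neighborSet, switchGraph, Set.mem_insert_iff, Set.mem_diff,
    Set.mem_singleton_iff, eq_self_iff_true, true_and, and_true, not_or, ne_eq]
  constructor
  · rintro (⟨h1, h2⟩ | ⟨h1, h2⟩) <;> aesop
  · rintro (rfl | ⟨h1, h2⟩) <;> aesop

lemma switch_nbr_v : (switchGraph G u v k m).neighborSet v = insert u (G.neighborSet v \ {m}) := by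
  have h1 : v ≠ m := G.ne_of_adj hvm
  have h2 : u ≠ k := G.ne_of_adj huk
  ext x
  simp only [mem_neighborSet, switchGraph, Set.mem_insert_iff, Set.mem_diff,
    Set.mem_singleton_iff, eq_self_iff_true, true_and, and_true, not_or, ne_eq]
  constructor
  · rintro (⟨h1, h2⟩ | ⟨h1, h2⟩) <;> aesop
  · rintro (rfl | ⟨h1, h2⟩) <;> aesop

lemma switch_nbr_k : (switchGraph G u v k m).neighborSet k = insert m (G.neighborSet k \ {u}) := by
  have h1 : k ≠ u := (G.ne_of_adj huk).symm
  have h2 : k ≠ v := hvk.symm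
  have h3 : G.Adj k u := huk.symm
  ext x
  simp only [mem_neighborSet, switchGraph, Set.mem_insert_iff, Set.mem_diff,
    Set.mem_singleton_iff, eq_self_iff_true, true_and, and_true, not_or, ne_eq]
  constructor
  · rintro (⟨h1, h2⟩ | ⟨h1, h2⟩) <;> aesop
  · rintro (rfl | ⟨h1, h2⟩) <;> aesop

lemma switch_nbr_m : (switchGraph G u v k m).neighborSet m = insert k (G.neighborSet m \ {v}) := by
  have h1 : m ≠ u := hum.symm
  have h2 : m ≠ v := (G.ne_of_adj hvm).symm
  have h3 : m ≠ k := hkmne.symm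
  have h4 : G.Adj m v := hvm.symm
  have h5 : ¬ G.Adj m k := fun hc => hkm hc.symm
  ext x
  simp only [mem_neighborSet, switchGraph, Set.mem_insert_iff, Set.mem_diff,
    Set.mem_singleton_iff, eq_self_iff_true, true_and, and_true, not_or, ne_eq]
  constructor
  · rintro (⟨h1, h2⟩ | ⟨h1, h2⟩) <;> aesop
  · rintro (rfl | ⟨h1, h2⟩) <;> aesop

omit huk hvm huv hkm huvne hum hvk hkmne in
lemma switch_nbr_other {w : V} (hwu : w ≠ u) (hwv : w ≠ v) (hwk : w ≠ k) (hwm : w ≠ m) :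
    (switchGraph G u v k m).neighborSet w = G.neighborSet w := by
  ext x
  simp only [mem_neighborSet, switchGraph, Set.mem_insert_iff, Set.mem_diff,
    Set.mem_singleton_iff, eq_self_iff_true, true_and, and_true, not_or, ne_eq]
  constructor
  · rintro (⟨h1, h2⟩ | ⟨h1, h2⟩) <;> aesop
  · intro h1; exact Or.inl ⟨h1, by aesop⟩

lemma switch_ncard [Finite V] (w : V) :
    Nat.card ((switchGraph G u v k m).neighborSet w) = Nat.card (G.neighborSet w) := by
  have huk' : u ≠ k := G.ne_of_adj huk
  have hvm' : v ≠ m := G.ne_of_adj hvm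
  rw [Nat.card_coe_set_eq, Nat.card_coe_set_eq]
  by_cases hwu : w = u
  · subst hwu
    rw [switch_nbr_u huk hvm huv hkm huvne hum hvk hkmne,
      Set.ncard_insert_of_notMem (by simp [huv] : v ∉ _),
      Set.ncard_diff_singleton_add_one (by exact huk)]
  by_cases hwv : w = v
  · subst hwv
    rw [switch_nbr_v huk hvm huv hkm huvne hum hvk hkmne,
      Set.ncard_insert_of_notMem (by rintro ⟨hc, -⟩; exact huv (G.adj_symm hc) : u ∉ _),
      Set.ncard_diff_singleton_add_one (by exact hvm)]
  by_cases hwk : w = k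
  · subst hwk
    rw [switch_nbr_k huk hvm huv hkm huvne hum hvk hkmne,
      Set.ncard_insert_of_notMem (by simp [hkm] : m ∉ _),
      Set.ncard_diff_singleton_add_one (by exact huk.symm)]
  by_cases hwm : w = m
  · subst hwm
    rw [switch_nbr_m huk hvm huv hkm huvne hum hvk hkmne,
      Set.ncard_insert_of_notMem (by rintro ⟨hc, -⟩; exact hkm (G.adj_symm hc) : k ∉ _),
      Set.ncard_diff_singleton_add_one (by exact hvm.symm)]
  rw [switch_nbr_other hwu hwv hwk hwm]

end Sets


/-- If `D` is graphic with `d 1 < n`, then for every `j ∈ [2..n]` there is a realization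
of `D` on the vertex set `{1, …, n}` (vertex `i`, encoded as `⟨i-1, _⟩ : Fin n`, has
degree `d i`) containing the edge `(1, j)`. -/
theorem stmt_5 (n : ℕ) (d : ℕ → ℕ) (hn : 1 ≤ n)
    (hpos : ∀ i, 1 ≤ i → i ≤ n → 1 ≤ d i)
    (hmono : ∀ i j, 1 ≤ i → i ≤ j → j ≤ n → d j ≤ d i)
    (h1 : d 1 < n)
    (hD : IsGraphic (List.ofFn fun i : Fin n => d (i.1 + 1)))
    (j : ℕ) (hj2 : 2 ≤ j) (hjn : j ≤ n) :
    ∃ G : SimpleGraph (Fin n),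
      (∀ v : Fin n, Nat.card (G.neighborSet v) = d (v.1 + 1)) ∧
        G.Adj ⟨0, by omega⟩ ⟨j - 1, by omega⟩ := by
  classical
  obtain ⟨G₀, hperm⟩ := hD
  obtain ⟨σ, hσ⟩ := perm_ofFn_equiv hperm
  set G₁ : SimpleGraph (Fin n) := G₀.comap σ with hG₁
  have hdeg : ∀ w : Fin n, Nat.card (G₁.neighborSet w) = d (w.1 + 1) := by
    intro w
    rw [← hσ w]
    exact Nat.card_congr (Equiv.subtypeEquiv σ (fun x => Iff.rfl))
  set u : Fin n := ⟨0, by omega⟩ with hu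
  set v : Fin n := ⟨j - 1, by omega⟩ with hv
  have huv : u ≠ v := by
    simp only [hu, hv, ne_eq, Fin.mk.injEq]
    omega
  by_cases hadj : G₁.Adj u v
  · exact ⟨G₁, hdeg, hadj⟩
  -- degrees as Finset degrees
  have hdeg' : ∀ w : Fin n, G₁.degree w = d (w.1 + 1) := by
    intro w
    rw [← hdeg w, ← SimpleGraph.card_neighborSet_eq_degree, Nat.card_eq_fintype_card]
  have hmax : ∀ w : Fin n, G₁.degree w ≤ G₁.degree u := by
    intro w
    rw [hdeg', hdeg']
    exact hmono 1 (w.1 + 1) le_rfl (by omega) (by omega)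
  -- find m
  have hvdeg : 1 ≤ G₁.degree v := by
    rw [hdeg']
    exact hpos (j - 1 + 1) (by omega) (by omega)
  obtain ⟨m, hm⟩ := Finset.card_pos.mp hvdeg
  have hvm : G₁.Adj v m := (SimpleGraph.mem_neighborFinset _ _ _).mp hm
  have hmu : m ≠ u := fun h => hadj (h ▸ hvm).symm
  -- find k
  have hk : ∃ k ∈ G₁.neighborFinset u, k ≠ m ∧ ¬G₁.Adj k m := by
    by_contra hc
    push_neg at hc
    have hsub : ∀ x ∈ G₁.neighborFinset u, x ≠ m → x ∈ G₁.neighborFinset m := by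
      intro x hx hxm
      exact (SimpleGraph.mem_neighborFinset _ _ _).mpr ((hc x hx hxm).symm)
    have hvmem : v ∈ G₁.neighborFinset m := (SimpleGraph.mem_neighborFinset _ _ _).mpr hvm.symm
    have hvnu : v ∉ G₁.neighborFinset u := fun h =>
      hadj ((SimpleGraph.mem_neighborFinset _ _ _).mp h)
    have hcontra : G₁.degree u + 1 ≤ G₁.degree m := by
      by_cases hum : G₁.Adj u m
      · have hmem_m : m ∈ G₁.neighborFinset u := (SimpleGraph.mem_neighborFinset _ _ _).mpr hum
        have hT : insert u (insert v ((G₁.neighborFinset u).erase m)) ⊆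
            G₁.neighborFinset m := by
          intro x hx
          rcases Finset.mem_insert.mp hx with rfl | hx
          · exact (SimpleGraph.mem_neighborFinset _ _ _).mpr hum.symm
          rcases Finset.mem_insert.mp hx with rfl | hx
          · exact hvmem
          · exact hsub x (Finset.mem_of_mem_erase hx) (Finset.ne_of_mem_erase hx)
        have hcard := Finset.card_le_card hT
        rw [Finset.card_insert_of_notMem, Finset.card_insert_of_notMem,
          Finset.card_erase_of_mem hmem_m] at hcard
        · have hpos' : 1 ≤ G₁.degree u := Finset.card_pos.mpr ⟨m, hmem_m⟩
          unfold SimpleGraph.degree at *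
          omega
        · intro h
          exact hvnu (Finset.mem_of_mem_erase h)
        · intro h
          rcases Finset.mem_insert.mp h with h | h
          · exact huv h
          · exact G₁.loopless.irrefl u ((SimpleGraph.mem_neighborFinset _ _ _).mp
              (Finset.mem_of_mem_erase h))
      · have hT : insert v (G₁.neighborFinset u) ⊆ G₁.neighborFinset m := by
          intro x hx
          rcases Finset.mem_insert.mp hx with rfl | hx
          · exact hvmem
          · refine hsub x hx (fun h => hum ?_)
            exact h ▸ (SimpleGraph.mem_neighborFinset _ _ _).mp hx
        have hcard := Finset.card_le_card hT
        rw [Finset.card_insert_of_notMem hvnu] at hcard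
        unfold SimpleGraph.degree at *
        omega
    have := hmax m
    omega
  obtain ⟨k, hkmem, hkm, hknadj⟩ := hk
  have huk : G₁.Adj u k := (SimpleGraph.mem_neighborFinset _ _ _).mp hkmem
  have hum : u ≠ m := hmu.symm
  have hvk : v ≠ k := fun h => hadj (h ▸ huk)
  refine ⟨switchGraph G₁ u v k m, fun w => ?_, switchGraph_adj_uv huv⟩
  rw [switch_ncard huk hvm hadj hknadj huv hum hvk hkm w]
  exact hdeg w
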